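/- arXiv:1510.07352 — 3 statements merged into one kernel-verified Lean document; each statement's English description precedes it below -/
import Mathlib

section
/- The dimension of m_2 is half the dimension of the adjoint nilpotent orbit of e_2: 2·dim_ℂ m_2 = n² − Σ_{a,b=1}^{k} min(λ_a, λ_b), where the right-hand side equals the dimension of the conjugation orbit of the nilpotent matrix e_2 of Jordan type λ. -/
open Matrix

/-- The boxes of the right-aligned Young diagram of `μ` (0-based: box `⟨r, s⟩`
corresponds to the box in row `r+1`, `s+1`-th from the right end of its row). -/
abbrev Box (k : ℕ) (μ : Fin k → ℕ) := (r : Fin k) × Fin (μ r)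

/-- The nilpotent `e₁` of Jordan type `μ`, sending `b_{r,s} ↦ b_{r,s+1}`. -/
noncomputable def e1 (k : ℕ) (μ : Fin k → ℕ) : Matrix (Box k μ) (Box k μ) ℂ :=
  Matrix.of fun t u => if t.1 = u.1 ∧ t.2.val = u.2.val + 1 then 1 else 0

/-- The nilpotent `e₂ = e₁ + Σ_{s=1}^{μ_j} E_{(i,s),(j,s)}`. -/
noncomputable def e2 (k : ℕ) (μ : Fin k → ℕ) (i j : Fin k) : Matrix (Box k μ) (Box k μ) ℂ :=
  e1 k μ + Matrix.of fun t u => if t.1 = i ∧ u.1 = j ∧ t.2.val = u.2.val then 1 else 0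

/-- `E_m := Σ_{r=i}^{j−m} Σ_{s=1}^{μ_{r+m}} E_{(r+m,s),(r,s)}`. -/
noncomputable def Em (k : ℕ) (μ : Fin k → ℕ) (i j : Fin k) (m : ℕ) :
    Matrix (Box k μ) (Box k μ) ℂ :=
  Matrix.of fun t u =>
    if i ≤ u.1 ∧ t.1 ≤ j ∧ t.1.val = u.1.val + m ∧ t.2.val = u.2.val then 1 else 0

/-- `m₁ := span{E_{t,u} : s_t < s_u}`. -/
noncomputable def m1 (k : ℕ) (μ : Fin k → ℕ) : Submodule ℂ (Matrix (Box k μ) (Box k μ) ℂ) :=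
  Submodule.span ℂ
    {x | ∃ t u : Box k μ, t.2.val < u.2.val ∧ x = Matrix.single t u 1}

/-- `k := span{E_1, …, E_{j−i}}`. -/
noncomputable def fk (k : ℕ) (μ : Fin k → ℕ) (i j : Fin k) :
    Submodule ℂ (Matrix (Box k μ) (Box k μ) ℂ) :=
  Submodule.span ℂ {x | ∃ m : ℕ, 1 ≤ m ∧ m ≤ j.val - i.val ∧ x = Em k μ i j m}

/-- `m₂ := m₁ + k`. -/
noncomputable def m2 (k : ℕ) (μ : Fin k → ℕ) (i j : Fin k) :
    Submodule ℂ (Matrix (Box k μ) (Box k μ) ℂ) :=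
  m1 k μ ⊔ fk k μ i j

/-- The covering partition `λ`. -/
def lam (k : ℕ) (μ : Fin k → ℕ) (i j : Fin k) : Fin k → ℕ :=
  fun r => if r = i then μ i + 1 else if r = j then μ j - 1 else μ r

/-- `χ_a(x) = Tr(e_a x)`. -/
noncomputable def chi (k : ℕ) (μ : Fin k → ℕ) (ea x : Matrix (Box k μ) (Box k μ) ℂ) : ℂ :=
  (ea * x).trace

private lemma sum_ite_lt' (m M : ℕ) :
    ∑ s ∈ Finset.range M, (if s < m then 1 else 0) = min m M := by
  rw [← Finset.card_filter]
  have h : (Finset.range M).filter (fun s => s < m) = Finset.range (min m M) := by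
    ext s; simp only [Finset.mem_filter, Finset.mem_range]; omega
  rw [h, Finset.card_range]

private lemma sum_ite_min (m m' M : ℕ) (h : m ≤ M) :
    ∑ s ∈ Finset.range M, (if s < m then 1 else 0) * (if s < m' then 1 else 0)
      = min m m' := by
  have h2 : ∀ s, (if s < m then (1:ℕ) else 0) * (if s < m' then 1 else 0)
      = if s < min m m' then 1 else 0 := by
    intro s
    by_cases h1 : s < m <;> by_cases h2 : s < m' <;> simp [h1, h2] <;> omega
  simp_rw [h2, sum_ite_lt']; omega

private lemma minsum_eq (k M : ℕ) (x : Fin k → ℕ) (hx : ∀ a, x a ≤ M) :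
    ∑ a : Fin k, ∑ b : Fin k, min (x a) (x b)
      = ∑ s ∈ Finset.range M, (∑ a : Fin k, if s < x a then 1 else 0)^2 := by
  have h : ∀ a b : Fin k, min (x a) (x b)
      = ∑ s ∈ Finset.range M, (if s < x a then 1 else 0) * (if s < x b then 1 else 0) :=
    fun a b => (sum_ite_min _ _ _ (hx a)).symm
  simp_rw [h]
  have swap1 : ∀ a : Fin k, (∑ b : Fin k, ∑ s ∈ Finset.range M,
        (if s < x a then (1:ℕ) else 0) * (if s < x b then 1 else 0))
      = ∑ s ∈ Finset.range M, ∑ b : Fin k,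
        (if s < x a then (1:ℕ) else 0) * (if s < x b then 1 else 0) :=
    fun a => Finset.sum_comm
  simp_rw [swap1]
  rw [Finset.sum_comm]
  refine Finset.sum_congr rfl fun s _ => ?_
  rw [pow_two, Finset.sum_mul_sum]

private lemma fin_count_lt (k c : ℕ) (h : c ≤ k) :
    ∑ a : Fin k, (if (a : ℕ) < c then 1 else 0) = c := by
  rw [Fin.sum_univ_eq_sum_range (fun s => if s < c then 1 else 0), sum_ite_lt']
  omega

private lemma lam_minsum (k : ℕ) (μ : Fin k → ℕ)
    (hpos : ∀ r, 0 < μ r) (hanti : Antitone μ)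
    (i j : Fin k) (hij : i < j)
    (hi : ∀ r, r < i → μ i < μ r)
    (hj : ∀ r, j < r → μ r < μ j) :
    (∑ a : Fin k, ∑ b : Fin k, min (lam k μ i j a) (lam k μ i j b)) + 2 * ((j:ℕ) - (i:ℕ))
      = ∑ a : Fin k, ∑ b : Fin k, min (μ a) (μ b) := by
  have hk : 0 < k := lt_of_le_of_lt (Nat.zero_le _) j.isLt
  set z : Fin k := ⟨0, hk⟩ with hz
  set M : ℕ := μ z + 1 with hM
  have hμ0 : ∀ a, μ a ≤ μ z := fun a => hanti (by simp [hz, Fin.le_def])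
  have hμM : ∀ a, μ a ≤ M := fun a => le_trans (hμ0 a) (Nat.le_succ _)
  have hlamM : ∀ a, lam k μ i j a ≤ M := by
    intro a
    simp only [lam]
    split_ifs with h1 h2
    · have := hμ0 i; omega
    · have := hμ0 j; omega
    · exact hμM a
  have hji : μ j ≤ μ i := hanti hij.le
  have hijne : i ≠ j := hij.ne
  rw [minsum_eq k M _ hlamM, minsum_eq k M _ hμM]
  set cL : ℕ → ℕ := fun s => ∑ a : Fin k, if s < lam k μ i j a then 1 else 0 with hcL
  set cN : ℕ → ℕ := fun s => ∑ a : Fin k, if s < μ a then 1 else 0 with hcN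
  -- pointwise facts
  have hltiff : ∀ a : Fin k, (μ i < μ a ↔ a < i) := by
    intro a
    constructor
    · intro h
      by_contra hc
      exact absurd (hanti (not_lt.mp hc)) (not_le.mpr h)
    · exact hi a
  have hltiffj : ∀ a : Fin k, (μ j - 1 < μ a ↔ a ≤ j) := by
    intro a
    have hpj := hpos j
    constructor
    · intro h
      by_contra hc
      have := hj a (not_le.mp hc)
      omega
    · intro h
      have := hanti h
      omega
  have fact1 : ∀ s, s ≠ μ i → s ≠ μ j - 1 → cL s = cN s := by
    intro s hs1 hs2
    refine Finset.sum_congr rfl fun a _ => ?_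
    by_cases hai : a = i
    · subst hai
      simp only [lam, if_pos rfl]
      split_ifs <;> omega
    · by_cases haj : a = j
      · subst haj
        simp only [lam, if_neg hai, if_pos rfl]
        have := hpos a
        split_ifs <;> omega
      · simp [lam, hai, haj]
  have fact2 : cN (μ i) = (i : ℕ) := by
    rw [hcN]
    have : ∀ a : Fin k, (if μ i < μ a then (1:ℕ) else 0) = if (a:ℕ) < (i:ℕ) then 1 else 0 := by
      intro a
      have := hltiff a
      rw [Fin.lt_def] at this
      split_ifs <;> omega
    simp only [this]
    exact fin_count_lt k i (le_of_lt i.isLt)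
  have fact3 : cL (μ i) = (i : ℕ) + 1 := by
    rw [hcL]
    have : ∀ a : Fin k, (if μ i < lam k μ i j a then (1:ℕ) else 0)
        = if (a:ℕ) < (i:ℕ) + 1 then 1 else 0 := by
      intro a
      by_cases hai : a = i
      · subst hai; simp [lam]
      · by_cases haj : a = j
        · subst haj
          simp only [lam, if_neg hai, if_pos rfl]
          have : (i:ℕ) < (a:ℕ) := hij
          split_ifs <;> omega
        · simp only [lam, if_neg hai, if_neg haj]
          have h1 := hltiff a
          rw [Fin.lt_def] at h1
          have h2 : (a:ℕ) ≠ (i:ℕ) := fun h => hai (Fin.ext h)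
          split_ifs <;> omega
    simp only [this]
    have hik : (i:ℕ) + 1 ≤ k := le_trans (Nat.succ_le_of_lt hij) (le_of_lt j.isLt)
    exact fin_count_lt k ((i:ℕ)+1) hik
  have fact4 : cN (μ j - 1) = (j : ℕ) + 1 := by
    rw [hcN]
    have : ∀ a : Fin k, (if μ j - 1 < μ a then (1:ℕ) else 0)
        = if (a:ℕ) < (j:ℕ) + 1 then 1 else 0 := by
      intro a
      have := hltiffj a
      rw [Fin.le_def] at this
      split_ifs <;> omega
    simp only [this]
    exact fin_count_lt k ((j:ℕ)+1) j.isLt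
  have fact5 : cL (μ j - 1) = (j : ℕ) := by
    rw [hcL]
    have : ∀ a : Fin k, (if μ j - 1 < lam k μ i j a then (1:ℕ) else 0)
        = if (a:ℕ) < (j:ℕ) then 1 else 0 := by
      intro a
      by_cases hai : a = i
      · subst hai
        simp only [lam, if_pos rfl]
        have h1 : (a:ℕ) < (j:ℕ) := hij
        have := hpos j
        split_ifs <;> omega
      · by_cases haj : a = j
        · subst haj
          simp only [lam, if_neg hai, if_pos rfl]
          simp
        · simp only [lam, if_neg hai, if_neg haj]
          have h1 := hltiffj a
          rw [Fin.le_def] at h1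
          have h2 : (a:ℕ) ≠ (j:ℕ) := fun h => haj (Fin.ext h)
          split_ifs <;> omega
    simp only [this]
    exact fin_count_lt k (j:ℕ) (le_of_lt j.isLt)
  -- split the sums
  have hmemi : μ i ∈ Finset.range M := by
    rw [Finset.mem_range]; have := hμ0 i; omega
  have hne : μ j - 1 ≠ μ i := by have := hpos j; omega
  have hmemj : μ j - 1 ∈ (Finset.range M).erase (μ i) := by
    rw [Finset.mem_erase, Finset.mem_range]
    have := hμ0 j; exact ⟨hne, by omega⟩
  have split : ∀ f : ℕ → ℕ, ∑ s ∈ Finset.range M, f s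
      = f (μ i) + (f (μ j - 1) + ∑ s ∈ ((Finset.range M).erase (μ i)).erase (μ j - 1), f s) := by
    intro f
    rw [← Finset.add_sum_erase _ f hmemi, ← Finset.add_sum_erase _ f hmemj]
  rw [split (fun s => (cL s)^2), split (fun s => (cN s)^2)]
  have htail : ∑ s ∈ ((Finset.range M).erase (μ i)).erase (μ j - 1), (cL s)^2
      = ∑ s ∈ ((Finset.range M).erase (μ i)).erase (μ j - 1), (cN s)^2 := by
    refine Finset.sum_congr rfl fun s hs => ?_
    rw [Finset.mem_erase, Finset.mem_erase] at hs
    rw [fact1 s hs.2.1 hs.1]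
  rw [htail, fact2, fact3, fact4, fact5]
  obtain ⟨d, hd⟩ : ∃ d, (j:ℕ) = (i:ℕ) + d := ⟨(j:ℕ) - (i:ℕ), by omega⟩
  have hsub : (j:ℕ) - (i:ℕ) = d := by omega
  rw [hsub, hd]
  ring

private lemma square_eq (k : ℕ) (μ : Fin k → ℕ) :
    (∑ a : Fin k, μ a)^2 = (∑ a : Fin k, ∑ b : Fin k, min (μ a) (μ b))
      + 2 * ∑ a : Fin k, ∑ b : Fin k, ∑ s ∈ Finset.range (μ a), ∑ s' ∈ Finset.range (μ b),
          (if s < s' then 1 else 0) := by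
  have key : ∀ a b : Fin k, μ a * μ b
      = min (μ a) (μ b)
        + (∑ s ∈ Finset.range (μ a), ∑ s' ∈ Finset.range (μ b), (if s < s' then (1:ℕ) else 0))
        + (∑ s ∈ Finset.range (μ a), ∑ s' ∈ Finset.range (μ b), (if s' < s then (1:ℕ) else 0)) := by
    intro a b
    have h1 : ∑ s ∈ Finset.range (μ a), ∑ s' ∈ Finset.range (μ b),
        ((if s = s' then (1:ℕ) else 0) + ((if s < s' then 1 else 0) + (if s' < s then 1 else 0)))
        = ∑ s ∈ Finset.range (μ a), ∑ s' ∈ Finset.range (μ b), (1:ℕ) := by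
      refine Finset.sum_congr rfl fun s _ => Finset.sum_congr rfl fun s' _ => ?_
      split_ifs <;> omega
    simp only [Finset.sum_add_distrib] at h1
    have h2 : ∑ s ∈ Finset.range (μ a), ∑ s' ∈ Finset.range (μ b), (1:ℕ) = μ a * μ b := by
      simp [Finset.sum_const, Finset.card_range, mul_comm]
    have h3 : ∑ s ∈ Finset.range (μ a), ∑ s' ∈ Finset.range (μ b), (if s = s' then (1:ℕ) else 0)
        = min (μ a) (μ b) := by
      have hin : ∀ s, ∑ s' ∈ Finset.range (μ b), (if s = s' then (1:ℕ) else 0)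
          = if s < μ b then 1 else 0 := by
        intro s
        rw [Finset.sum_ite_eq (Finset.range (μ b)) s (fun _ => (1:ℕ))]
        simp [Finset.mem_range]
      simp only [hin]
      rw [sum_ite_lt']
      omega
    rw [h3, h2] at h1
    omega
  calc (∑ a : Fin k, μ a)^2 = ∑ a : Fin k, ∑ b : Fin k, μ a * μ b := by
        rw [pow_two, Finset.sum_mul_sum]
    _ = _ := by
        simp only [key, Finset.sum_add_distrib]
        have hswap : (∑ a : Fin k, ∑ b : Fin k, ∑ s ∈ Finset.range (μ a),
              ∑ s' ∈ Finset.range (μ b), (if s' < s then (1:ℕ) else 0))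
            = ∑ a : Fin k, ∑ b : Fin k, ∑ s ∈ Finset.range (μ a),
              ∑ s' ∈ Finset.range (μ b), (if s < s' then (1:ℕ) else 0) := by
          rw [Finset.sum_comm]
          refine Finset.sum_congr rfl fun a _ => Finset.sum_congr rfl fun b _ => ?_
          exact Finset.sum_comm
        rw [hswap]
        ring

private lemma card_S (k : ℕ) (μ : Fin k → ℕ) :
    Fintype.card {p : Box k μ × Box k μ // p.1.2.val < p.2.2.val}
      = ∑ a : Fin k, ∑ b : Fin k, ∑ s ∈ Finset.range (μ a), ∑ s' ∈ Finset.range (μ b),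
          (if s < s' then 1 else 0) := by
  classical
  rw [Fintype.card_subtype, Finset.card_filter]
  rw [Fintype.sum_prod_type]
  rw [← Finset.univ_sigma_univ, Finset.sum_sigma]
  refine Finset.sum_congr rfl fun a _ => ?_
  simp only [Finset.sum_sigma]
  rw [Finset.sum_comm]
  refine Finset.sum_congr rfl fun b _ => ?_
  rw [Fin.sum_univ_eq_sum_range (fun s => ∑ s' : Fin (μ b), if s < (s' : ℕ) then 1 else 0)]
  refine Finset.sum_congr rfl fun s _ => ?_
  rw [Fin.sum_univ_eq_sum_range (fun s' => if s < s' then (1:ℕ) else 0)]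

private noncomputable def gfam (k : ℕ) (μ : Fin k → ℕ) (i j : Fin k) :
    {p : Box k μ × Box k μ // p.1.2.val < p.2.2.val} ⊕ Fin (j.val - i.val) →
      Matrix (Box k μ) (Box k μ) ℂ :=
  Sum.elim (fun p => Matrix.single p.1.1 p.1.2 1) (fun m => Em k μ i j (m.val + 1))

private lemma span_gfam (k : ℕ) (μ : Fin k → ℕ) (i j : Fin k) :
    Submodule.span ℂ (Set.range (gfam k μ i j)) = m2 k μ i j := by
  rw [gfam, Set.Sum.elim_range, Submodule.span_union, m2]
  congr 1
  · rw [m1]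
    congr 1
    ext x
    constructor
    · rintro ⟨⟨⟨t, u⟩, h⟩, rfl⟩
      exact ⟨t, u, h, rfl⟩
    · rintro ⟨t, u, h, rfl⟩
      exact ⟨⟨(t, u), h⟩, rfl⟩
  · rw [fk]
    congr 1
    ext x
    constructor
    · rintro ⟨m, rfl⟩
      exact ⟨m.val + 1, by omega, by have := m.isLt; omega, rfl⟩
    · rintro ⟨m, h1, h2, rfl⟩
      refine ⟨⟨m - 1, by omega⟩, ?_⟩
      have hm : m - 1 + 1 = m := by omega
      simp only [hm]

private lemma li_gfam (k : ℕ) (μ : Fin k → ℕ) (i j : Fin k)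
    (hpos : ∀ r, 0 < μ r) (hij : i < j) :
    LinearIndependent ℂ (gfam k μ i j) := by
  classical
  rw [Fintype.linearIndependent_iff]
  intro c hc x
  have hent : ∀ t u : Box k μ, (∑ y, c y * (gfam k μ i j y t u)) = 0 := by
    intro t u
    have h := congrFun (congrFun hc t) u
    simpa [Matrix.sum_apply, Matrix.smul_apply, smul_eq_mul] using h
  cases x with
  | inl p =>
    obtain ⟨⟨t, u⟩, hlt⟩ := p
    have hlt' : (t.2 : ℕ) < (u.2 : ℕ) := hlt
    have h0 := hent t u
    rw [Fintype.sum_eq_single (Sum.inl ⟨(t, u), hlt⟩ :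
        {p : Box k μ × Box k μ // p.1.2.val < p.2.2.val} ⊕ Fin (j.val - i.val))] at h0
    · simpa [gfam, Matrix.single] using h0
    · intro y hy
      match y with
      | Sum.inl ⟨⟨t', u'⟩, h'⟩ =>
        by_cases ht : t' = t ∧ u' = u
        · exfalso
          apply hy
          obtain ⟨h1, h2⟩ := ht
          subst h1; subst h2
          rfl
        · have hval : Matrix.single t' u' (1:ℂ) t u = 0 := by
            rw [Matrix.single]
            simp only [Matrix.of_apply]
            rw [if_neg ht]
          simp [gfam, hval]
      | Sum.inr m =>
        have hval : Em k μ i j (m.val + 1) t u = 0 := by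
          rw [Em]
          simp only [Matrix.of_apply]
          rw [if_neg]
          rintro ⟨-, -, -, h4⟩
          omega
        simp [gfam, hval]
  | inr m =>
    have hk1 : i.val + m.val + 1 < k := by
      have h1 := m.isLt
      have h2 := j.isLt
      omega
    have h0 := hent ⟨⟨i.val + m.val + 1, hk1⟩, ⟨0, hpos _⟩⟩ ⟨i, ⟨0, hpos i⟩⟩
    rw [Fintype.sum_eq_single (Sum.inr m :
        {p : Box k μ × Box k μ // p.1.2.val < p.2.2.val} ⊕ Fin (j.val - i.val))] at h0
    · have hval : Em k μ i j (m.val + 1)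
          ⟨⟨i.val + m.val + 1, hk1⟩, ⟨0, hpos _⟩⟩ ⟨i, ⟨0, hpos i⟩⟩ = 1 := by
        rw [Em]
        simp only [Matrix.of_apply]
        rw [if_pos]
        refine ⟨le_refl _, ?_, ?_, trivial⟩
        · rw [Fin.le_def]
          show i.val + m.val + 1 ≤ j.val
          have := m.isLt
          omega
        · show i.val + m.val + 1 = i.val + (m.val + 1)
          omega
      simpa [gfam, hval] using h0
    · intro y hy
      match y with
      | Sum.inl ⟨⟨t', u'⟩, h'⟩ =>
        have hval : Matrix.single t' u' (1:ℂ)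
            ⟨⟨i.val + m.val + 1, hk1⟩, ⟨0, hpos _⟩⟩ ⟨i, ⟨0, hpos i⟩⟩ = 0 := by
          rw [Matrix.single]
          simp only [Matrix.of_apply]
          rw [if_neg]
          rintro ⟨h1, h2⟩
          subst h1; subst h2
          exact absurd h' (lt_irrefl 0)
        simp [gfam, hval]
      | Sum.inr m' =>
        have hmm : m' ≠ m := fun h => hy (by rw [h])
        have hval : Em k μ i j (m'.val + 1)
            ⟨⟨i.val + m.val + 1, hk1⟩, ⟨0, hpos _⟩⟩ ⟨i, ⟨0, hpos i⟩⟩ = 0 := by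
          rw [Em]
          simp only [Matrix.of_apply]
          rw [if_neg]
          rintro ⟨-, -, h3, -⟩
          have h3' : i.val + m.val + 1 = i.val + (m'.val + 1) := h3
          exact hmm (Fin.ext (by omega))
        simp [gfam, hval]


/-- `2·dim m₂ = n² − Σ_{a,b} min(λ_a, λ_b)`, half the dimension of the
adjoint nilpotent orbit of `e₂` (of Jordan type `λ`). -/
theorem stmt14
    (k : ℕ) (n : ℕ) (μ : Fin k → ℕ)
    (hpos : ∀ r, 0 < μ r) (hanti : Antitone μ)
    (hn : ∑ r : Fin k, μ r = n)
    (i j : Fin k) (hij : i < j)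
    (hi : ∀ r, r < i → μ i < μ r)
    (hj : ∀ r, j < r → μ r < μ j)
    (hcase : (j : ℕ) = (i : ℕ) + 1 ∨ μ i = μ j)
    :
    2 * Module.finrank ℂ (m2 k μ i j) =
      n ^ 2 - ∑ a : Fin k, ∑ b : Fin k, min (lam k μ i j a) (lam k μ i j b) := by
  classical
  have hfin : Module.finrank ℂ (m2 k μ i j)
      = Fintype.card {p : Box k μ × Box k μ // p.1.2.val < p.2.2.val} + (j.val - i.val) := by
    rw [← span_gfam k μ i j, finrank_span_eq_card (li_gfam k μ i j hpos hij)]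
    simp [Fintype.card_sum, Fintype.card_fin]
  have hB := lam_minsum k μ hpos hanti i j hij hi hj
  have hS := card_S k μ
  have hn2 : n ^ 2 = (∑ a : Fin k, ∑ b : Fin k, min (μ a) (μ b))
      + 2 * ∑ a : Fin k, ∑ b : Fin k, ∑ s ∈ Finset.range (μ a),
          ∑ s' ∈ Finset.range (μ b), (if s < s' then 1 else 0) := by
    rw [← hn]; exact square_eq k μ
  rw [hfin, hS, hn2]
  omega
end

section
/- In the subregular case μ = (n−1, 1) with i = 1 and j = 2 (so λ = (n)): the element e_2 is a regular nilpotent, i.e. e_2^{n−1} ≠ 0 and e_2^n = 0 (a single Jordan block of size n); and m_2 equals span{E_{t,u} : t = (r,s), u = (r',s'), with s < s' or (s = s' and r > r')}, which is exactly the set of matrices that are strictly lower triangular with respect to the total order on B in which (r',s') precedes (r,s) iff s < s' or (s = s' and r > r'). In particular dim_ℂ m_2 = n(n−1)/2, which is half the dimension of the regular nilpotent orbit, and m_2 is the nilradical of a Borel subalgebra of sl_n(ℂ), a Premet subalgebra for the regular nilpotent e_2. -/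
open Matrix

/-! ### Auxiliary lemmas -/

section Aux

/-- Coe of the span of a set of matrix units indexed by a predicate. -/
lemma span_std_coe {I : Type*} [Fintype I] [DecidableEq I] (P : I → I → Prop)
    [∀ t u, Decidable (P t u)] :
    (Submodule.span ℂ {x : Matrix I I ℂ | ∃ t u : I, P t u ∧ x = Matrix.single t u 1} :
      Set (Matrix I I ℂ)) = {x : Matrix I I ℂ | ∀ t u : I, ¬ P t u → x t u = 0} := by
  apply le_antisymm
  · rintro x hx
    induction hx using Submodule.span_induction with
    | mem y hy =>
      obtain ⟨t, u, hP, rfl⟩ := hy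
      intro a b hab
      exact Matrix.single_apply_of_ne _ _ _ _ _ (by rintro ⟨rfl, rfl⟩; exact hab hP)
    | zero => intro a b _; rfl
    | add y z _ _ hy hz => intro a b h; simp [Matrix.add_apply, hy a b h, hz a b h]
    | smul c y _ hy => intro a b h; simp [Matrix.smul_apply, hy a b h]
  · intro x hx
    rw [Matrix.matrix_eq_sum_single x]
    apply Submodule.sum_mem; intro t _
    apply Submodule.sum_mem; intro u _
    by_cases h : P t u
    · rw [show Matrix.single t u (x t u) = x t u • Matrix.single t u 1 by
        rw [Matrix.smul_single, smul_eq_mul, mul_one]]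
      exact Submodule.smul_mem _ _ (Submodule.subset_span ⟨t, u, h, rfl⟩)
    · rw [hx t u h, Matrix.single_zero]
      exact Submodule.zero_mem _

/-- Dimension of the span of a set of matrix units indexed by a predicate. -/
lemma finrank_span_std {I : Type*} [Fintype I] [DecidableEq I] (P : I → I → Prop)
    [∀ t u, Decidable (P t u)] :
    Module.finrank ℂ (Submodule.span ℂ
      {x : Matrix I I ℂ | ∃ t u : I, P t u ∧ x = Matrix.single t u 1}) =
    Fintype.card {p : I × I // P p.1 p.2} := by
  have hset : {x : Matrix I I ℂ | ∃ t u : I, P t u ∧ x = Matrix.single t u 1} =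
      Set.range (fun p : {p : I × I // P p.1 p.2} => Matrix.stdBasis ℂ I I p.1) := by
    ext x
    constructor
    · rintro ⟨t, u, hP, rfl⟩
      exact ⟨⟨(t, u), hP⟩, by simp [Matrix.stdBasis_eq_single]⟩
    · rintro ⟨⟨⟨t, u⟩, hP⟩, rfl⟩
      exact ⟨t, u, hP, by simp [Matrix.stdBasis_eq_single]⟩
  rw [hset]
  exact finrank_span_eq_card
    ((Matrix.stdBasis ℂ I I).linearIndependent.comp Subtype.val Subtype.val_injective)

/-- The number of strictly "lower triangular" pairs. -/
lemma card_lt_pairs (n : ℕ) :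
    Fintype.card {q : Fin n × Fin n // q.1 < q.2} = n * (n - 1) / 2 := by
  have E : {q : Fin n × Fin n // q.1 < q.2} ≃ Σ j : Fin n, Fin j.val :=
    { toFun := fun q => ⟨q.1.2, ⟨q.1.1.val, q.2⟩⟩
      invFun := fun p => ⟨(⟨p.2.val, lt_trans p.2.isLt p.1.isLt⟩, p.1), p.2.isLt⟩
      left_inv := fun q => by ext <;> simp
      right_inv := fun p => by rcases p with ⟨j, i⟩; simp }
  rw [Fintype.card_congr E, Fintype.card_sigma]
  simp only [Fintype.card_fin]
  rw [Fin.sum_univ_eq_sum_range (fun i => i), Finset.sum_range_id]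

/-- Equality in `Box` is equality of coordinates. -/
lemma box_eq {k : ℕ} {μ : Fin k → ℕ} {a b : Box k μ} :
    a = b ↔ a.1 = b.1 ∧ a.2.val = b.2.val := by
  constructor
  · rintro rfl; exact ⟨rfl, rfl⟩
  · rcases a with ⟨x, s⟩; rcases b with ⟨y, t⟩
    rintro ⟨h1, h2⟩
    dsimp at h1 h2
    subst h1
    exact congrArg _ (Fin.ext h2)

/-- The single regular Jordan block of size `n` (lower shift matrix). -/
noncomputable def Jmat (n : ℕ) : Matrix (Fin n) (Fin n) ℂ :=
  Matrix.of fun t u => if t.val = u.val + 1 then 1 else 0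

lemma Jpow (n m : ℕ) :
    (Jmat n) ^ m = Matrix.of fun t u => if t.val = u.val + m then (1 : ℂ) else 0 := by
  induction m with
  | zero =>
    ext t u
    simp [Matrix.one_apply, Fin.ext_iff, eq_comm]
  | succ m ih =>
    ext t u
    rw [pow_succ, ih]
    simp only [Matrix.mul_apply, Matrix.of_apply, Jmat]
    by_cases h : u.val + 1 < n
    · rw [Finset.sum_eq_single (⟨u.val + 1, h⟩ : Fin n)]
      · rw [show u.val + 1 + m = u.val + (m + 1) by omega]
        simp
      · intro v _ hv
        have hv' : v.val ≠ u.val + 1 := fun hc => hv (Fin.ext hc)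
        simp [hv']
      · simp
    · rw [Finset.sum_eq_zero, if_neg (by omega)]
      intro v _
      have : v.val ≠ u.val + 1 := by have := v.isLt; omega
      simp [this]

/-- The reindexing bijection between the boxes of `(n−1,1)` and `Fin n`. -/
def phiE (n : ℕ) (hn : 2 ≤ n) : Box 2 ![n - 1, 1] ≃ Fin n where
  toFun t :=
    if h : t.1.val = 0 then
      ⟨t.2.val + 1, by
        have hrow : ![n - 1, 1] t.1 = n - 1 := by
          rw [show t.1 = 0 from Fin.ext h]; simp
        have h2 : t.2.val < n - 1 := lt_of_lt_of_eq t.2.isLt hrow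
        omega⟩
    else ⟨0, by omega⟩
  invFun x :=
    if _ : x.val = 0 then ⟨1, ⟨0, by simp⟩⟩
    else ⟨0, ⟨x.val - 1, by simp; omega⟩⟩
  left_inv t := by
    obtain ⟨r, s⟩ := t
    by_cases h : r.val = 0
    · obtain rfl : r = 0 := Fin.ext h
      dsimp only
      rw [dif_pos (show ((0 : Fin 2) : ℕ) = 0 from rfl), dif_neg (by simp)]
      have : (⟨s.val + 1 - 1, by simpa using s.isLt⟩ : Fin (![n - 1, 1] 0)) = s :=
        Fin.ext (by simp)
      rw [this]
    · obtain rfl : r = 1 := Fin.ext (by omega)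
      dsimp only
      rw [dif_neg (show ¬((1 : Fin 2) : ℕ) = 0 by decide),
        dif_pos (show ((⟨0, by omega⟩ : Fin n) : ℕ) = 0 from rfl)]
      have hs := s.isLt
      simp only [Matrix.cons_val_one, Matrix.head_cons, Matrix.cons_val_zero] at hs
      have : (⟨0, by simp⟩ : Fin (![n - 1, 1] 1)) = s :=
        Fin.ext (by simp only [Fin.val_mk]; omega)
      rw [this]
  right_inv x := by
    by_cases h : x.val = 0
    · dsimp only
      rw [dif_pos h, dif_neg (show ¬((1 : Fin 2) : ℕ) = 0 by decide)]
      exact Fin.ext (by simp [h.symm])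
    · dsimp only
      rw [dif_neg h, dif_pos (show ((0 : Fin 2) : ℕ) = 0 from rfl)]
      exact Fin.ext (by simp; omega)

lemma phiE_val (n : ℕ) (hn : 2 ≤ n) (t : Box 2 ![n - 1, 1]) :
    ((phiE n hn t) : ℕ) = if t.1.val = 0 then t.2.val + 1 else 0 := by
  rcases t with ⟨r, s⟩
  by_cases h : r.val = 0 <;> simp [phiE, h, Fin.ext_iff, -Fin.val_eq_zero_iff]

lemma row_lt0 (n : ℕ) {r : Fin 2} (s : Fin (![n - 1, 1] r)) (h : r.val = 0) :
    s.val < n - 1 :=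
  lt_of_lt_of_eq s.isLt (by rw [show r = 0 from Fin.ext h]; simp)

lemma row_lt1 (n : ℕ) {r : Fin 2} (s : Fin (![n - 1, 1] r)) (h : ¬ r.val = 0) :
    s.val < 1 :=
  lt_of_lt_of_eq s.isLt (by rw [show r = 1 from Fin.ext (by omega)]; simp)

lemma e2_eq (n : ℕ) (hn : 2 ≤ n) :
    e2 2 ![n - 1, 1] 0 1 =
      Matrix.of fun t u => Jmat n (phiE n hn t) (phiE n hn u) := by
  ext t u
  rcases t with ⟨r, s⟩
  rcases u with ⟨r', s'⟩
  have hb : r.val < 2 := r.isLt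
  have hb' : r'.val < 2 := r'.isLt
  by_cases hr : r.val = 0 <;> by_cases hr' : r'.val = 0 <;>
  [ (have hs := row_lt0 n s hr; have hs' := row_lt0 n s' hr');
    (have hs := row_lt0 n s hr; have hs' := row_lt1 n s' hr');
    (have hs := row_lt1 n s hr; have hs' := row_lt0 n s' hr');
    (have hs := row_lt1 n s hr; have hs' := row_lt1 n s' hr')] <;>
  simp only [e2, e1, Jmat, Matrix.add_apply, Matrix.of_apply, phiE_val, Fin.ext_iff,
    Fin.val_zero, Fin.val_one, hr, hr', if_true, if_false]
  all_goals try split_ifs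
  all_goals first | omega | (simp_all <;> omega) | simp_all

lemma cond_iff (n : ℕ) (hn : 2 ≤ n) (t u : Box 2 ![n - 1, 1]) :
    (t.2.val < u.2.val ∨ (t.2.val = u.2.val ∧ u.1 < t.1)) ↔ phiE n hn t < phiE n hn u := by
  rcases t with ⟨r, s⟩
  rcases u with ⟨r', s'⟩
  have hb : r.val < 2 := r.isLt
  have hb' : r'.val < 2 := r'.isLt
  by_cases hr : r.val = 0 <;> by_cases hr' : r'.val = 0 <;>
  [ (have hs := row_lt0 n s hr; have hs' := row_lt0 n s' hr');
    (have hs := row_lt0 n s hr; have hs' := row_lt1 n s' hr');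
    (have hs := row_lt1 n s hr; have hs' := row_lt0 n s' hr');
    (have hs := row_lt1 n s hr; have hs' := row_lt1 n s' hr')] <;>
  simp only [Fin.lt_def, phiE_val, hr, hr', if_true, if_false] <;>
  omega

end Aux

/-- In the subregular case `μ = (n−1, 1)`, `i = 1`, `j = 2`
(so `λ = (n)`): the element `e₂` is a regular nilpotent (a single Jordan block of
size `n`); `m₂` is exactly the span of the matrix units `E_{t,u}` with `s_t < s_u`, or
`s_t = s_u` and `r_t > r_u`, i.e. the set of matrices strictly lower triangular with
respect to the total order in which `(r',s')` precedes `(r,s)` iff `s < s'`, or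
`s = s'` and `r > r'`; and `dim m₂ = n(n−1)/2`, half the dimension of the regular
nilpotent orbit (`m₂` is the nilradical of a Borel subalgebra of `sl_n(ℂ)`, a Premet
subalgebra for `e₂`). -/
theorem stmt16 (n : ℕ) (hn : 2 ≤ n) (μ : Fin 2 → ℕ) (hμ : μ = ![n - 1, 1]) :
    (e2 2 μ 0 1) ^ (n - 1) ≠ 0
    ∧ (e2 2 μ 0 1) ^ n = 0
    ∧ m2 2 μ 0 1 =
        Submodule.span ℂ
          {x | ∃ t u : Box 2 μ,
            (t.2.val < u.2.val ∨ (t.2.val = u.2.val ∧ u.1 < t.1)) ∧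
            x = Matrix.single t u 1}
    ∧ (m2 2 μ 0 1 : Set (Matrix (Box 2 μ) (Box 2 μ) ℂ)) =
        {x | ∀ t u : Box 2 μ,
          ¬(t.2.val < u.2.val ∨ (t.2.val = u.2.val ∧ u.1 < t.1)) → x t u = 0}
    ∧ Module.finrank ℂ (m2 2 μ 0 1) = n * (n - 1) / 2 := by
  subst hμ
  set φ := phiE n hn with hφ
  -- the reindexing algebra equivalence
  have he2 : e2 2 ![n - 1, 1] 0 1 = (Matrix.reindexAlgEquiv ℂ ℂ φ.symm) (Jmat n) := by
    rw [e2_eq n hn]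
    ext t u
    simp [Matrix.reindexAlgEquiv_apply, Matrix.reindex_apply, hφ]
  have hpow : ∀ m : ℕ, (e2 2 ![n - 1, 1] 0 1) ^ m =
      (Matrix.reindexAlgEquiv ℂ ℂ φ.symm) ((Jmat n) ^ m) := by
    intro m
    rw [he2, ← map_pow]
  -- part 3 preparation
  have h0 : (0 : ℕ) < ![n - 1, 1] 1 := by simp
  have h1 : (0 : ℕ) < ![n - 1, 1] 0 := by simp; omega
  have hEm : Em 2 ![n - 1, 1] 0 1 1 =
      Matrix.single (⟨1, ⟨0, h0⟩⟩ : Box 2 ![n - 1, 1]) ⟨0, ⟨0, h1⟩⟩ 1 := by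
    ext a b
    rcases a with ⟨ra, sa⟩
    rcases b with ⟨rb, sb⟩
    have hba : ra.val < 2 := ra.isLt
    have hbb : rb.val < 2 := rb.isLt
    by_cases hra : ra.val = 0 <;> by_cases hrb : rb.val = 0 <;>
    [ (have hs := row_lt0 n sa hra; have hs' := row_lt0 n sb hrb);
      (have hs := row_lt0 n sa hra; have hs' := row_lt1 n sb hrb);
      (have hs := row_lt1 n sa hra; have hs' := row_lt0 n sb hrb);
      (have hs := row_lt1 n sa hra; have hs' := row_lt1 n sb hrb)] <;>
    simp only [Em, Matrix.single, Matrix.of_apply, box_eq, Fin.le_def, Fin.ext_iff,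
      Fin.lt_def, Fin.val_zero, Fin.val_one, Fin.val_mk]
    all_goals try split_ifs
    all_goals first | rfl | omega | (exfalso; omega)
  have h3 : m2 2 ![n - 1, 1] 0 1 =
      Submodule.span ℂ
        {x | ∃ t u : Box 2 ![n - 1, 1],
          (t.2.val < u.2.val ∨ (t.2.val = u.2.val ∧ u.1 < t.1)) ∧
          x = Matrix.single t u 1} := by
    rw [m2, m1, fk, ← Submodule.span_union]
    congr 1
    ext x
    simp only [Set.mem_union, Set.mem_setOf_eq]
    constructor
    · rintro (⟨t, u, h, rfl⟩ | ⟨m, hm1, hm2, rfl⟩)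
      · exact ⟨t, u, Or.inl h, rfl⟩
      · have hm : m = 1 := by
          simp only [Fin.val_one, Fin.val_zero] at hm2
          omega
        subst hm
        exact ⟨⟨1, ⟨0, h0⟩⟩, ⟨0, ⟨0, h1⟩⟩, Or.inr ⟨rfl, by simp [Fin.lt_def]⟩, hEm⟩
    · rintro ⟨t, u, (h | ⟨hs, hr⟩), rfl⟩
      · exact Or.inl ⟨t, u, h, rfl⟩
      · right
        refine ⟨1, le_refl 1, by simp, ?_⟩
        rw [Fin.lt_def] at hr
        have hb1 : t.1.val < 2 := t.1.isLt
        have hb2 : u.1.val < 2 := u.1.isLt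
        have htr : t.1.val = 1 := by omega
        have hts : t.2.val = 0 := by
          have := row_lt1 n t.2 (by omega)
          omega
        have hur : u.1.val = 0 := by omega
        have ht : t = ⟨1, ⟨0, h0⟩⟩ := box_eq.mpr ⟨Fin.ext (by simpa using htr), by simpa using hts⟩
        have hu : u = ⟨0, ⟨0, h1⟩⟩ := box_eq.mpr ⟨Fin.ext (by simpa using hur), by simp; omega⟩
        rw [ht, hu, hEm]
  refine ⟨?_, ?_, h3, ?_, ?_⟩
  · -- e2 ^ (n-1) ≠ 0
    intro hc
    rw [hpow] at hc
    have hJ : (Jmat n) ^ (n - 1) = 0 := by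
      have := (Matrix.reindexAlgEquiv ℂ ℂ φ.symm).injective
        (hc.trans (map_zero (Matrix.reindexAlgEquiv ℂ ℂ φ.symm)).symm)
      exact this
    have h10 : ((Jmat n) ^ (n - 1)) ⟨n - 1, by omega⟩ ⟨0, by omega⟩ = 1 := by
      rw [Jpow]
      simp
    rw [hJ] at h10
    simp at h10
  · -- e2 ^ n = 0
    rw [hpow]
    have hJ : (Jmat n) ^ n = 0 := by
      rw [Jpow]
      ext t u
      have := t.isLt
      rw [Matrix.of_apply, if_neg (by omega)]
      rfl
    rw [hJ, map_zero]
  · -- set description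
    rw [h3]
    exact span_std_coe
      (fun t u : Box 2 ![n - 1, 1] =>
        t.2.val < u.2.val ∨ (t.2.val = u.2.val ∧ u.1 < t.1))
  · -- dimension
    rw [h3, finrank_span_std
      (fun t u : Box 2 ![n - 1, 1] =>
        t.2.val < u.2.val ∨ (t.2.val = u.2.val ∧ u.1 < t.1))]
    rw [← card_lt_pairs n]
    exact Fintype.card_congr
      (Equiv.subtypeEquiv (Equiv.prodCongr φ φ) (fun p => by
        simpa using cond_iff n hn p.1 p.2))
end

section
/- The subalgebra m_1 is a Premet subalgebra for e_1: (i) if x ∈ m_1 and [e_1, x] = 0 then x = 0 (m_1 meets the centralizer of e_1 trivially); (ii) 2·dim_ℂ m_1 = n² − Σ_{a,b=1}^{k} min(μ_a, μ_b), i.e. dim m_1 is half the dimension of the adjoint nilpotent orbit of e_1; and (iii) Tr(e_1(xy − yx)) = 0 for all x, y ∈ m_1, i.e. χ_1 restricts to a character of the Lie algebra m_1. -/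
open Matrix

section Helpers

variable {k : ℕ} {μ : Fin k → ℕ}

lemma Box.ext' {v w : Box k μ} (h1 : v.1 = w.1) (h2 : v.2.val = w.2.val) : v = w := by
  rcases v with ⟨a, s⟩; rcases w with ⟨b, s'⟩
  dsimp at h1 h2; subst h1
  exact congrArg _ (Fin.ext h2)

lemma m1_support {x : Matrix (Box k μ) (Box k μ) ℂ} (hx : x ∈ m1 k μ)
    {t u : Box k μ} (h : u.2.val ≤ t.2.val) : x t u = 0 := by
  let P : Submodule ℂ (Matrix (Box k μ) (Box k μ) ℂ) :=
  { carrier := {x | ∀ t u : Box k μ, u.2.val ≤ t.2.val → x t u = 0}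
    add_mem' := fun ha hb t u h => by
      simp only [Matrix.add_apply, ha t u h, hb t u h, add_zero]
    zero_mem' := fun t u h => rfl
    smul_mem' := fun c a ha t u h => by
      simp only [Matrix.smul_apply, ha t u h, smul_zero] }
  have hle : m1 k μ ≤ P := by
    rw [m1, Submodule.span_le]
    rintro y ⟨t', u', hlt, rfl⟩ t u hle
    simp only [Matrix.single, Matrix.of_apply]
    rw [if_neg]
    rintro ⟨rfl, rfl⟩
    omega
  exact hle hx t u h

lemma e1_mul_apply_zero (x : Matrix (Box k μ) (Box k μ) ℂ) (r : Fin k) (s : Fin (μ r))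
    (hs : s.val = 0) (u : Box k μ) : (e1 k μ * x) ⟨r, s⟩ u = 0 := by
  rw [Matrix.mul_apply]
  apply Finset.sum_eq_zero; intro v _
  simp only [e1, Matrix.of_apply]
  rw [if_neg, zero_mul]
  rintro ⟨-, h2⟩; omega

lemma e1_mul_apply (x : Matrix (Box k μ) (Box k μ) ℂ) (r : Fin k) (s s' : Fin (μ r))
    (hs : s.val = s'.val + 1) (u : Box k μ) :
    (e1 k μ * x) ⟨r, s⟩ u = x ⟨r, s'⟩ u := by
  rw [Matrix.mul_apply, Finset.sum_eq_single (⟨r, s'⟩ : Box k μ)]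
  · simp [e1, hs]
  · intro v _ hv
    simp only [e1, Matrix.of_apply]
    rw [if_neg, zero_mul]
    rintro ⟨h1, h2⟩
    exact hv (Box.ext' h1.symm (show v.2.val = s'.val by omega))
  · simp

lemma mul_e1_apply (x : Matrix (Box k μ) (Box k μ) ℂ) (t : Box k μ) (r' : Fin k)
    (s' s'' : Fin (μ r')) (h : s''.val = s'.val + 1) :
    (x * e1 k μ) t ⟨r', s'⟩ = x t ⟨r', s''⟩ := by
  rw [Matrix.mul_apply, Finset.sum_eq_single (⟨r', s''⟩ : Box k μ)]
  · simp [e1, h]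
  · intro v _ hv
    simp only [e1, Matrix.of_apply]
    rw [if_neg, mul_zero]
    rintro ⟨h1, h2⟩
    exact hv (Box.ext' h1 (show v.2.val = s''.val by omega))
  · simp

lemma mul_e1_apply_zero (x : Matrix (Box k μ) (Box k μ) ℂ) (t : Box k μ) (r' : Fin k)
    (s' : Fin (μ r')) (h : μ r' ≤ s'.val + 1) : (x * e1 k μ) t ⟨r', s'⟩ = 0 := by
  rw [Matrix.mul_apply]
  apply Finset.sum_eq_zero; intro v _
  rcases v with ⟨a, sv⟩
  simp only [e1, Matrix.of_apply]
  rw [if_neg, mul_zero]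
  rintro ⟨h1, h2⟩
  have h1' : a = r' := h1
  have h2' : sv.val = s'.val + 1 := h2
  subst h1'
  have := sv.isLt
  omega

lemma centralizer_meets_m1 (x : Matrix (Box k μ) (Box k μ) ℂ) (hx : x ∈ m1 k μ)
    (hc : e1 k μ * x = x * e1 k μ) : x = 0 := by
  have key : ∀ N (r : Fin k) (s : Fin (μ r)) (u : Box k μ),
      s.val ≤ N → s.val < u.2.val → x ⟨r, s⟩ u = 0 := by
    intro N
    induction N with
    | zero =>
      rintro r s ⟨r', s'⟩ hN hlt
      have hs : s.val = 0 := Nat.le_zero.mp hN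
      have hlt' : s.val < s'.val := hlt
      have hlt2 : s'.val - 1 < μ r' := by have := s'.isLt; omega
      have h1 : (e1 k μ * x) ⟨r, s⟩ ⟨r', ⟨s'.val - 1, hlt2⟩⟩ = 0 :=
        e1_mul_apply_zero x r s hs _
      rw [hc, mul_e1_apply x _ r' ⟨s'.val - 1, hlt2⟩ s'
        (show s'.val = s'.val - 1 + 1 by omega)] at h1
      exact h1
    | succ N ih =>
      rintro r s ⟨r', s'⟩ hN hlt
      rcases Nat.lt_or_ge s.val (N + 1) with h | h
      · exact ih r s ⟨r', s'⟩ (by omega) hlt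
      · have hs : s.val = N + 1 := by omega
        have hlt' : s.val < s'.val := hlt
        have hlt2 : s'.val - 1 < μ r' := by have := s'.isLt; omega
        have hltN : N < μ r := by have := s.isLt; omega
        have h1 : (e1 k μ * x) ⟨r, s⟩ ⟨r', ⟨s'.val - 1, hlt2⟩⟩
            = x ⟨r, ⟨N, hltN⟩⟩ ⟨r', ⟨s'.val - 1, hlt2⟩⟩ :=
          e1_mul_apply x r s ⟨N, hltN⟩ (show s.val = N + 1 by omega) _
        have h2 : x ⟨r, ⟨N, hltN⟩⟩ ⟨r', ⟨s'.val - 1, hlt2⟩⟩ = 0 :=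
          ih r ⟨N, hltN⟩ ⟨r', ⟨s'.val - 1, hlt2⟩⟩ le_rfl (show N < s'.val - 1 by omega)
        rw [hc, mul_e1_apply x _ r' ⟨s'.val - 1, hlt2⟩ s'
          (show s'.val = s'.val - 1 + 1 by omega)] at h1
        exact h1.trans h2
  ext t u
  rcases t with ⟨r, s⟩
  simp only [Matrix.zero_apply]
  by_cases h : s.val < u.2.val
  · exact key s.val r s u le_rfl h
  · exact m1_support hx (Nat.le_of_not_lt h)

lemma trace_e1_mul_mul (x y : Matrix (Box k μ) (Box k μ) ℂ)
    (hx : ∀ t u : Box k μ, u.2.val ≤ t.2.val → x t u = 0)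
    (hy : ∀ t u : Box k μ, u.2.val ≤ t.2.val → y t u = 0) :
    (e1 k μ * (x * y)).trace = 0 := by
  rw [Matrix.trace]
  apply Finset.sum_eq_zero; intro t _
  rw [Matrix.diag_apply, Matrix.mul_apply]
  apply Finset.sum_eq_zero; intro u _
  rw [Matrix.mul_apply, Finset.mul_sum]
  apply Finset.sum_eq_zero; intro v _
  by_cases h1 : t.1 = u.1 ∧ t.2.val = u.2.val + 1
  · by_cases h2 : u.2.val < v.2.val
    · rw [hy v t (by omega), mul_zero, mul_zero]
    · rw [hx u v (by omega), zero_mul, mul_zero]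
  · show e1 k μ t u * _ = 0
    simp only [e1, Matrix.of_apply]
    rw [if_neg h1, zero_mul]

lemma inner_eq_min (A B : ℕ) :
    (∑ s : Fin A, ∑ s' : Fin B, if s.val = s'.val then (1 : ℕ) else 0) = min A B := by
  have inner : ∀ s : Fin A,
      (∑ s' : Fin B, if s.val = s'.val then (1 : ℕ) else 0)
        = if s.val < B then 1 else 0 := by
    intro s
    by_cases h : s.val < B
    · rw [if_pos h, Finset.sum_eq_single (⟨s.val, h⟩ : Fin B)]
      · simp
      · intro v _ hv
        rw [if_neg]
        intro he
        exact hv (Fin.ext he.symm)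
      · simp
    · rw [if_neg h]
      apply Finset.sum_eq_zero; intro v _
      rw [if_neg]
      have := v.isLt; omega
  rw [Finset.sum_congr rfl (fun s _ => inner s),
    Fin.sum_univ_eq_sum_range (fun i => if i < B then 1 else 0) A,
    ← Finset.card_filter]
  have : Finset.filter (fun i => i < B) (Finset.range A) = Finset.range (min A B) := by
    ext i
    simp only [Finset.mem_filter, Finset.mem_range]
    omega
  rw [this, Finset.card_range]

end Helpers

/-- `m₁` is a Premet subalgebra for `e₁`: it meets the centralizer of
`e₁` trivially, its dimension is half the dimension of the nilpotent orbit of `e₁`, and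
`χ₁` restricts to a character of `m₁`. -/
theorem stmt17
    (k : ℕ) (n : ℕ) (μ : Fin k → ℕ)
    (hpos : ∀ r, 0 < μ r) (hanti : Antitone μ)
    (hn : ∑ r : Fin k, μ r = n) :
    (∀ x ∈ m1 k μ, e1 k μ * x - x * e1 k μ = 0 → x = 0)
    ∧ 2 * Module.finrank ℂ (m1 k μ) =
        n ^ 2 - ∑ a : Fin k, ∑ b : Fin k, min (μ a) (μ b)
    ∧ (∀ x ∈ m1 k μ, ∀ y ∈ m1 k μ, (e1 k μ * (x * y - y * x)).trace = 0) := by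
  refine ⟨?_, ?_, ?_⟩
  · intro x hx hcomm
    exact centralizer_meets_m1 x hx (by rwa [sub_eq_zero] at hcomm)
  · have hset : {x | ∃ t u : Box k μ, t.2.val < u.2.val ∧ x = Matrix.single t u 1}
        = Set.range (fun p : {p : Box k μ × Box k μ // p.1.2.val < p.2.2.val} =>
            Matrix.single p.val.1 p.val.2 (1 : ℂ)) := by
      ext x
      constructor
      · rintro ⟨t, u, h, rfl⟩; exact ⟨⟨(t, u), h⟩, rfl⟩
      · rintro ⟨⟨⟨t, u⟩, h⟩, rfl⟩; exact ⟨t, u, h, rfl⟩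
    have hli : LinearIndependent ℂ
        (fun p : {p : Box k μ × Box k μ // p.1.2.val < p.2.2.val} =>
          Matrix.single p.val.1 p.val.2 (1 : ℂ)) := by
      have h2 := (Matrix.stdBasis ℂ (Box k μ) (Box k μ)).linearIndependent.comp
        (fun p : {p : Box k μ × Box k μ // p.1.2.val < p.2.2.val} => p.val)
        Subtype.val_injective
      have heq : (fun p : {p : Box k μ × Box k μ // p.1.2.val < p.2.2.val} =>
          Matrix.single p.val.1 p.val.2 (1 : ℂ))
          = (⇑(Matrix.stdBasis ℂ (Box k μ) (Box k μ)) ∘ fun p => p.val) := by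
        funext p
        obtain ⟨⟨t, u⟩, h⟩ := p
        exact (Matrix.stdBasis_eq_single ℂ t u).symm
      rw [heq]; exact h2
    have hdim : Module.finrank ℂ (m1 k μ)
        = Fintype.card {p : Box k μ × Box k μ // p.1.2.val < p.2.2.val} := by
      rw [m1, hset, finrank_span_eq_card hli]
    have hbox : ∀ (f : Box k μ → ℕ),
        ∑ t : Box k μ, f t = ∑ a : Fin k, ∑ s : Fin (μ a), f ⟨a, s⟩ := fun f => by
      rw [← Finset.univ_sigma_univ, Finset.sum_sigma]
    have hC : (∑ p : Box k μ × Box k μ, if p.1.2.val < p.2.2.val then (1 : ℕ) else 0)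
        = ∑ a : Fin k, ∑ b : Fin k, ∑ s : Fin (μ a), ∑ s' : Fin (μ b),
            if s.val < s'.val then (1 : ℕ) else 0 :=
      calc (∑ p : Box k μ × Box k μ, if p.1.2.val < p.2.2.val then (1 : ℕ) else 0)
          = ∑ t : Box k μ, ∑ u : Box k μ, if t.2.val < u.2.val then (1 : ℕ) else 0 := by
            rw [Fintype.sum_prod_type]
        _ = ∑ a : Fin k, ∑ s : Fin (μ a), ∑ u : Box k μ,
              if s.val < u.2.val then (1 : ℕ) else 0 := hbox _
        _ = ∑ a : Fin k, ∑ s : Fin (μ a), ∑ b : Fin k, ∑ s' : Fin (μ b),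
              if s.val < s'.val then (1 : ℕ) else 0 :=
            Finset.sum_congr rfl fun a _ => Finset.sum_congr rfl fun s _ => hbox _
        _ = ∑ a : Fin k, ∑ b : Fin k, ∑ s : Fin (μ a), ∑ s' : Fin (μ b),
              if s.val < s'.val then (1 : ℕ) else 0 :=
            Finset.sum_congr rfl fun a _ => Finset.sum_comm
    have hsym : (∑ a : Fin k, ∑ b : Fin k, ∑ s : Fin (μ a), ∑ s' : Fin (μ b),
          if s.val < s'.val then (1 : ℕ) else 0)
        = ∑ a : Fin k, ∑ b : Fin k, ∑ s : Fin (μ a), ∑ s' : Fin (μ b),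
          if s'.val < s.val then (1 : ℕ) else 0 := by
      rw [Finset.sum_comm]
      refine Finset.sum_congr rfl fun a _ => Finset.sum_congr rfl fun b _ => ?_
      rw [Finset.sum_comm]
    have htri : ∀ a b : Fin k,
        ((∑ s : Fin (μ a), ∑ s' : Fin (μ b), if s.val < s'.val then (1 : ℕ) else 0)
          + (∑ s : Fin (μ a), ∑ s' : Fin (μ b), if s'.val < s.val then (1 : ℕ) else 0))
          + (∑ s : Fin (μ a), ∑ s' : Fin (μ b), if s.val = s'.val then (1 : ℕ) else 0)
        = μ a * μ b := by
      intro a b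
      have h1 : ∀ s : Fin (μ a), ∀ s' : Fin (μ b),
          ((if s.val < s'.val then (1 : ℕ) else 0) + (if s'.val < s.val then 1 else 0))
            + (if s.val = s'.val then 1 else 0) = 1 := by
        intro s s'; split_ifs <;> omega
      have hstep : ∀ s : Fin (μ a),
          ((∑ s' : Fin (μ b), if s.val < s'.val then (1 : ℕ) else 0)
            + (∑ s' : Fin (μ b), if s'.val < s.val then (1 : ℕ) else 0))
            + (∑ s' : Fin (μ b), if s.val = s'.val then (1 : ℕ) else 0)
          = ∑ _s' : Fin (μ b), 1 := by
        intro s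
        rw [← Finset.sum_add_distrib, ← Finset.sum_add_distrib]
        exact Finset.sum_congr rfl fun s' _ => h1 s s'
      rw [← Finset.sum_add_distrib, ← Finset.sum_add_distrib]
      rw [Finset.sum_congr rfl fun s (_ : s ∈ Finset.univ) => hstep s]
      simp [Finset.card_univ, mul_comm]
    have hn2 : ((∑ a : Fin k, ∑ b : Fin k, ∑ s : Fin (μ a), ∑ s' : Fin (μ b),
          if s.val < s'.val then (1 : ℕ) else 0)
        + (∑ a : Fin k, ∑ b : Fin k, ∑ s : Fin (μ a), ∑ s' : Fin (μ b),
          if s'.val < s.val then (1 : ℕ) else 0))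
        + (∑ a : Fin k, ∑ b : Fin k, ∑ s : Fin (μ a), ∑ s' : Fin (μ b),
          if s.val = s'.val then (1 : ℕ) else 0)
        = n ^ 2 := by
      have hstep : ∀ a : Fin k,
          ((∑ b : Fin k, ∑ s : Fin (μ a), ∑ s' : Fin (μ b),
              if s.val < s'.val then (1 : ℕ) else 0)
            + (∑ b : Fin k, ∑ s : Fin (μ a), ∑ s' : Fin (μ b),
              if s'.val < s.val then (1 : ℕ) else 0))
            + (∑ b : Fin k, ∑ s : Fin (μ a), ∑ s' : Fin (μ b),
              if s.val = s'.val then (1 : ℕ) else 0)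
          = ∑ b : Fin k, μ a * μ b := by
        intro a
        rw [← Finset.sum_add_distrib, ← Finset.sum_add_distrib]
        exact Finset.sum_congr rfl fun b _ => htri a b
      calc ((∑ a : Fin k, ∑ b : Fin k, ∑ s : Fin (μ a), ∑ s' : Fin (μ b),
            if s.val < s'.val then (1 : ℕ) else 0)
          + (∑ a : Fin k, ∑ b : Fin k, ∑ s : Fin (μ a), ∑ s' : Fin (μ b),
            if s'.val < s.val then (1 : ℕ) else 0))
          + (∑ a : Fin k, ∑ b : Fin k, ∑ s : Fin (μ a), ∑ s' : Fin (μ b),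
            if s.val = s'.val then (1 : ℕ) else 0)
          = ∑ a : Fin k, (((∑ b : Fin k, ∑ s : Fin (μ a), ∑ s' : Fin (μ b),
              if s.val < s'.val then (1 : ℕ) else 0)
            + (∑ b : Fin k, ∑ s : Fin (μ a), ∑ s' : Fin (μ b),
              if s'.val < s.val then (1 : ℕ) else 0))
            + (∑ b : Fin k, ∑ s : Fin (μ a), ∑ s' : Fin (μ b),
              if s.val = s'.val then (1 : ℕ) else 0)) := by
            rw [← Finset.sum_add_distrib, ← Finset.sum_add_distrib]
        _ = ∑ a : Fin k, ∑ b : Fin k, μ a * μ b :=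
            Finset.sum_congr rfl fun a _ => hstep a
        _ = n ^ 2 := by rw [← hn, sq, Finset.sum_mul_sum]
    have hmin : (∑ a : Fin k, ∑ b : Fin k, ∑ s : Fin (μ a), ∑ s' : Fin (μ b),
          if s.val = s'.val then (1 : ℕ) else 0)
        = ∑ a : Fin k, ∑ b : Fin k, min (μ a) (μ b) :=
      Finset.sum_congr rfl fun a _ => Finset.sum_congr rfl fun b _ => inner_eq_min _ _
    rw [hdim, Fintype.card_subtype, Finset.card_filter, hC]
    obtain ⟨N, hN⟩ : ∃ N, n ^ 2 = N := ⟨_, rfl⟩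
    rw [hN] at hn2 ⊢
    omega
  · intro x hx y hy
    have hx' : ∀ t u : Box k μ, u.2.val ≤ t.2.val → x t u = 0 := fun t u h => m1_support hx h
    have hy' : ∀ t u : Box k μ, u.2.val ≤ t.2.val → y t u = 0 := fun t u h => m1_support hy h
    rw [mul_sub, Matrix.trace_sub, trace_e1_mul_mul x y hx' hy',
      trace_e1_mul_mul y x hy' hx', sub_zero]
end
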